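/- As ℓ → 0⁺ (with E > 0, C > 0, D ≥ 0, 1 < α < 2 fixed), the smallest positive root v_max(ℓ) of f_ℓ(v) = E ℓ^{2α/(2−α)} 2^{−α/(2−α)} − v² + C v^α + D v^{α−1}(ℓ/√2)^{2/(2−α)} converges to C^{1/(2−α)}, the unique positive root of C v^α = v². -/

import Mathlib

open Real Filter Set

/-- As `ℓ → 0⁺`, the smallest positive root `v_max(ℓ)` of
`f_ℓ(v) = E ℓ^{2α/(2−α)} 2^{−α/(2−α)} − v² + C v^α + D v^{α−1}(ℓ/√2)^{2/(2−α)}`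
converges to `C^{1/(2−α)}`, the unique positive root of `C v^α = v²`. -/
theorem vmax_limit (C D E α : ℝ) (hC : 0 < C) (hD : 0 ≤ D) (hE : 0 < E)
    (hα1 : 1 < α) (hα2 : α < 2) (vmax : ℝ → ℝ)
    (hvmax : ∀ ℓ : ℝ, 0 < ℓ →
      (0 < vmax ℓ ∧
        E * ℓ ^ (2 * α / (2 - α)) * 2 ^ (-α / (2 - α)) - vmax ℓ ^ 2
          + C * vmax ℓ ^ α
          + D * vmax ℓ ^ (α - 1) * (ℓ / Real.sqrt 2) ^ (2 / (2 - α)) = 0) ∧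
      ∀ v : ℝ, 0 < v →
        E * ℓ ^ (2 * α / (2 - α)) * 2 ^ (-α / (2 - α)) - v ^ 2 + C * v ^ α
          + D * v ^ (α - 1) * (ℓ / Real.sqrt 2) ^ (2 / (2 - α)) = 0 →
        vmax ℓ ≤ v) :
    Filter.Tendsto vmax (nhdsWithin 0 (Set.Ioi 0)) (nhds (C ^ (1 / (2 - α)))) := by
  have h2α : 0 < 2 - α := by linarith
  set L : ℝ := C ^ (1 / (2 - α)) with hLdef
  have hL : 0 < L := Real.rpow_pos_of_pos hC _
  have hLC : L ^ (2 - α) = C := by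
    rw [hLdef, ← Real.rpow_mul hC.le, one_div_mul_cancel (ne_of_gt h2α), Real.rpow_one]
  -- factorization of C v^α − v²
  have hsign : ∀ v : ℝ, 0 < v → C * v ^ α - v ^ (2:ℕ) = v ^ α * (C - v ^ (2 - α)) := by
    intro v hv
    have h2 : (v:ℝ) ^ (2:ℕ) = v ^ ((2:ℕ):ℝ) := (Real.rpow_natCast v 2).symm
    rw [h2]
    push_cast
    rw [show (2:ℝ) = α + (2 - α) by ring, Real.rpow_add hv]
    ring
  set a : ℝ := 2 * α / (2 - α) with hadef
  set b : ℝ := 2 / (2 - α) with hbdef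
  set K : ℝ := (2:ℝ) ^ (-α / (2 - α)) with hKdef
  have hK : 0 < K := Real.rpow_pos_of_pos (by norm_num) _
  have ha : 0 < a := div_pos (by linarith) h2α
  have hb : 0 < b := div_pos (by norm_num) h2α
  -- lower bound
  have hlb : ∀ ℓ : ℝ, 0 < ℓ → L < vmax ℓ := by
    intro ℓ hℓ
    obtain ⟨⟨hv0, heq⟩, _⟩ := hvmax ℓ hℓ
    by_contra hcon
    push_neg at hcon
    have h1 : vmax ℓ ^ (2 - α) ≤ C := by
      calc vmax ℓ ^ (2 - α) ≤ L ^ (2 - α) :=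
        Real.rpow_le_rpow hv0.le hcon h2α.le
      _ = C := hLC
    have h2 : 0 ≤ C * vmax ℓ ^ α - vmax ℓ ^ (2:ℕ) := by
      rw [hsign _ hv0]
      exact mul_nonneg (Real.rpow_pos_of_pos hv0 _).le (by linarith)
    have hε : 0 < E * ℓ ^ a * K :=
      mul_pos (mul_pos hE (Real.rpow_pos_of_pos hℓ _)) hK
    have hDt : 0 ≤ D * vmax ℓ ^ (α - 1) * (ℓ / Real.sqrt 2) ^ b :=
      mul_nonneg (mul_nonneg hD (Real.rpow_pos_of_pos hv0 _).le)
        (Real.rpow_pos_of_pos (div_pos hℓ (Real.sqrt_pos.mpr (by norm_num))) _).le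
    linarith [heq]
  rw [Metric.tendsto_nhds]
  intro ε hε
  set η : ℝ := ε / 2 with hηdef
  have hη : 0 < η := by positivity
  have hLη : L < L + η := by linarith
  -- M := (L+η)² − C (L+η)^α > 0
  set M : ℝ := (L + η) ^ (2:ℕ) - C * (L + η) ^ α with hMdef
  have hM : 0 < M := by
    have h1 : C < (L + η) ^ (2 - α) := by
      calc C = L ^ (2 - α) := hLC.symm
      _ < (L + η) ^ (2 - α) := Real.rpow_lt_rpow hL.le hLη h2α
    have h2 := hsign (L + η) (by linarith)
    have h3 : 0 < (L + η) ^ α * ((L + η) ^ (2 - α) - C) :=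
      mul_pos (Real.rpow_pos_of_pos (by linarith) _) (by linarith)
    rw [hMdef]; nlinarith
  -- the perturbation tends to 0
  have t1 : Tendsto (fun ℓ : ℝ => ℓ ^ a) (nhds 0) (nhds 0) := by
    have hcont := (Real.continuousAt_rpow_const 0 a (Or.inr ha.le)).tendsto
    simpa [Real.zero_rpow (ne_of_gt ha)] using hcont
  have t2 : Tendsto (fun ℓ : ℝ => (ℓ / Real.sqrt 2) ^ b) (nhds 0) (nhds 0) := by
    have hdiv : Tendsto (fun ℓ : ℝ => ℓ / Real.sqrt 2) (nhds 0) (nhds 0) := by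
      have := (continuous_id.div_const (Real.sqrt 2)).tendsto 0
      simpa using this
    have hcont := (Real.continuousAt_rpow_const 0 b (Or.inr hb.le)).tendsto
    have := hcont.comp hdiv
    simpa [Function.comp_def, Real.zero_rpow (ne_of_gt hb)] using this
  have th : Tendsto (fun ℓ : ℝ =>
      E * ℓ ^ a * K + D * (L + η) ^ (α - 1) * (ℓ / Real.sqrt 2) ^ b)
      (nhds 0) (nhds 0) := by
    have h1 := ((t1.const_mul E).mul_const K)
    have h2 := t2.const_mul (D * (L + η) ^ (α - 1))
    have := h1.add h2
    simpa [mul_comm] using this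
  have th' := tendsto_nhdsWithin_of_tendsto_nhds (s := Set.Ioi (0:ℝ)) th
  have hev : ∀ᶠ ℓ in nhdsWithin 0 (Set.Ioi 0),
      E * ℓ ^ a * K + D * (L + η) ^ (α - 1) * (ℓ / Real.sqrt 2) ^ b < M :=
    th'.eventually_lt_const hM
  filter_upwards [hev, self_mem_nhdsWithin] with ℓ hhℓ (hℓ : 0 < ℓ)
  obtain ⟨⟨hv0, heq⟩, hmin⟩ := hvmax ℓ hℓ
  have hlow : L < vmax ℓ := hlb ℓ hℓ
  -- F has a root in [L, L+η]
  set F : ℝ → ℝ := fun v =>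
    E * ℓ ^ a * K - v ^ (2:ℕ) + C * v ^ α + D * v ^ (α - 1) * (ℓ / Real.sqrt 2) ^ b
    with hFdef
  have hε' : 0 < E * ℓ ^ a * K :=
    mul_pos (mul_pos hE (Real.rpow_pos_of_pos hℓ _)) hK
  have hδ : 0 < (ℓ / Real.sqrt 2) ^ b :=
    Real.rpow_pos_of_pos (div_pos hℓ (Real.sqrt_pos.mpr (by norm_num))) _
  have hFL : 0 < F L := by
    have h1 : C * L ^ α - L ^ (2:ℕ) = 0 := by
      rw [hsign L hL, hLC]; ring_nf
    have h2 : 0 ≤ D * L ^ (α - 1) * (ℓ / Real.sqrt 2) ^ b :=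
      mul_nonneg (mul_nonneg hD (Real.rpow_pos_of_pos hL _).le) hδ.le
    simp only [hFdef]
    linarith
  have hFLη : F (L + η) < 0 := by
    have h1 : D * (L + η) ^ (α - 1) * (ℓ / Real.sqrt 2) ^ b
        ≤ D * (L + η) ^ (α - 1) * (ℓ / Real.sqrt 2) ^ b := le_refl _
    simp only [hFdef]
    have := hhℓ
    rw [hMdef] at this
    linarith
  have hcont : ContinuousOn F (Set.Icc L (L + η)) := by
    have hne : ∀ x ∈ Set.Icc L (L + η), (x:ℝ) ≠ 0 ∨ (0:ℝ) ≤ α := fun x hx =>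
      Or.inl (ne_of_gt (lt_of_lt_of_le hL hx.1))
    have hne' : ∀ x ∈ Set.Icc L (L + η), (x:ℝ) ≠ 0 ∨ (0:ℝ) ≤ α - 1 := fun x hx =>
      Or.inl (ne_of_gt (lt_of_lt_of_le hL hx.1))
    have c1 : ContinuousOn (fun v : ℝ => v ^ α) (Set.Icc L (L + η)) :=
      ContinuousOn.rpow_const continuousOn_id hne
    have c2 : ContinuousOn (fun v : ℝ => v ^ (α - 1)) (Set.Icc L (L + η)) :=
      ContinuousOn.rpow_const continuousOn_id hne'
    exact ((continuousOn_const.sub (continuous_pow 2).continuousOn).add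
      (continuousOn_const.mul c1)).add ((continuousOn_const.mul c2).mul continuousOn_const)
  have hsub := intermediate_value_Icc' hLη.le hcont
  have h0mem : (0:ℝ) ∈ Set.Icc (F (L + η)) (F L) := ⟨hFLη.le, hFL.le⟩
  obtain ⟨v, hvmem, hFv⟩ := hsub h0mem
  have hv0' : 0 < v := lt_of_lt_of_le hL hvmem.1
  have hle : vmax ℓ ≤ v := hmin v hv0' hFv
  have hup : vmax ℓ ≤ L + η := le_trans hle hvmem.2
  rw [Real.dist_eq, abs_of_pos (by linarith)]
  linarith
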